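/- Let U ⊆ ℂ be open and convex, let 0 < δ < 1/4, let ψ : U → ℂ be holomorphic with |ψ(z) − 1| < δ on U, let g be the principal square root of ψ, and let G be a primitive of g on U. Let a, b ∈ U be distinct with [a, b] ⊆ U, set L = |b − a|, and let d be the Euclidean distance from the segment [a, b] to ℂ ∖ U; assume d > 4δL. Then for every x ∈ U with G(x) lying on the Euclidean segment from G(a) to G(b), one has: the Euclidean distance from x to ℂ ∖ U is greater than d/4, and the Euclidean distance from G(x) to ℂ ∖ G(U) is greater than d/4. -/

import Mathlib

/-- `g` is the principal square root of `ψ` on `U`: it is holomorphic on `U`, with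
`g² = ψ` and `Re g > 0` on `U`. -/
def IsPrincipalSqrtOn (U : Set ℂ) (ψ g : ℂ → ℂ) : Prop :=
  DifferentiableOn ℂ g U ∧ ∀ z ∈ U, g z ^ 2 = ψ z ∧ 0 < (g z).re

set_option maxHeartbeats 1000000 in
/-- Part (iv) of Lemma 2.5 of the paper, in the planar model: with `ψ`, `g`, `G` as
before on an open convex `U`, `a ≠ b` in `U` with `[a,b] ⊆ U`, `L = |b − a|`, and `d`
the Euclidean distance from `[a,b]` to `ℂ ∖ U` satisfying `d > 4δL`, every point `x ∈ U`
whose image `G x` lies on the straight segment from `G a` to `G b` satisfies: the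
distance from `x` to `ℂ ∖ U` exceeds `d/4`, and the distance from `G x` to
`ℂ ∖ G(U)` exceeds `d/4`. -/
theorem geodesic_segment_far_from_boundary (U : Set ℂ) (hU : IsOpen U)
    (hconv : Convex ℝ U)
    (δ : ℝ) (hδ0 : 0 < δ) (hδ : δ < 1 / 4) (ψ g G : ℂ → ℂ)
    (hψ : DifferentiableOn ℂ ψ U)
    (hψb : ∀ z ∈ U, ‖ψ z - 1‖ < δ)
    (hg : IsPrincipalSqrtOn U ψ g)
    (hG : ∀ z ∈ U, HasDerivAt G (g z) z)
    (a b : ℂ) (ha : a ∈ U) (hb : b ∈ U) (hab : a ≠ b)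
    (hseg : segment ℝ a b ⊆ U)
    (L d : ℝ) (hL : L = ‖b - a‖)
    (hd : d = ⨅ x : segment ℝ a b, Metric.infDist (x : ℂ) Uᶜ)
    (hdL : d > 4 * δ * L) :
    ∀ x ∈ U, G x ∈ segment ℝ (G a) (G b) →
      Metric.infDist x Uᶜ > d / 4 ∧ Metric.infDist (G x) (G '' U)ᶜ > d / 4 := by
  obtain ⟨hgdiff, hgprop⟩ := hg
  have hL0 : 0 < L := by
    rw [hL]
    exact norm_pos_iff.mpr (sub_ne_zero.mpr hab.symm)
  have hd0 : 0 < d := lt_trans (by positivity) hdL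
  have hδ1 : δ < 1 := by linarith
  have h1δ : (0:ℝ) < 1 - δ := by linarith
  -- the complement of U is nonempty
  have hUc : Uᶜ.Nonempty := by
    by_contra h
    rw [Set.not_nonempty_iff_eq_empty] at h
    have hz : ∀ p : segment ℝ a b, Metric.infDist (p : ℂ) Uᶜ = 0 := by
      intro p; rw [h]; exact Metric.infDist_empty
    have : d = 0 := by
      rw [hd]
      haveI : Nonempty (segment ℝ a b) := ⟨⟨a, left_mem_segment ℝ a b⟩⟩
      simp [hz]
    linarith
  -- |g - 1| ≤ δ on U
  have habs : ∀ z ∈ U, ‖g z - 1‖ ≤ δ := by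
    intro z hz
    obtain ⟨hsq, hre⟩ := hgprop z hz
    have hfact : (g z - 1) * (g z + 1) = ψ z - 1 := by rw [← hsq]; ring
    have h3 : 1 ≤ ‖g z + 1‖ := by
      have : (1:ℝ) ≤ (g z + 1).re := by simp [Complex.add_re]; linarith
      exact this.trans (Complex.re_le_norm _)
    calc ‖g z - 1‖ ≤ ‖g z - 1‖ * ‖g z + 1‖ :=
          le_mul_of_one_le_right (norm_nonneg _) h3
      _ = ‖ψ z - 1‖ := by rw [← norm_mul, hfact]
      _ ≤ δ := (hψb z hz).le
  -- the key mean value estimate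
  have key : ∀ z ∈ U, ∀ w ∈ U, ‖G z - G w - (z - w)‖ ≤ δ * ‖z - w‖ := by
    intro z hz w hw
    have h := hconv.norm_image_sub_le_of_norm_hasFDerivWithin_le
      (f := fun t => G t - t)
      (f' := fun t => ContinuousLinearMap.smulRight (1 : ℂ →L[ℂ] ℂ) (g t - 1))
      (fun t ht => (((hG t ht).sub (hasDerivAt_id t)).hasFDerivAt).hasFDerivWithinAt)
      (fun t ht => by
        rw [ContinuousLinearMap.norm_smulRight_apply]
        simpa using habs t ht)
      hw hz
    have : G z - z - (G w - w) = G z - G w - (z - w) := by ring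
    simpa [this] using h
  -- bi-Lipschitz bounds
  have hlow : ∀ z ∈ U, ∀ w ∈ U, (1 - δ) * ‖z - w‖ ≤ ‖G z - G w‖ := by
    intro z hz w hw
    have h := key z hz w hw
    have h2 : ‖z - w‖ - ‖G z - G w‖ ≤ ‖G z - G w - (z - w)‖ := by
      have := norm_sub_norm_le ((z : ℂ) - w) (G z - G w)
      have heq : ‖(z - w) - (G z - G w)‖ = ‖G z - G w - (z - w)‖ := by
        rw [norm_sub_rev]
      simpa [heq] using this
    nlinarith [norm_nonneg (z - w)]
  have hup : ∀ z ∈ U, ∀ w ∈ U, ‖G z - G w‖ ≤ (1 + δ) * ‖z - w‖ := by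
    intro z hz w hw
    have h := key z hz w hw
    have h2 : ‖G z - G w‖ ≤ ‖G z - G w - (z - w)‖ + ‖z - w‖ := by
      have h3 := norm_add_le (G z - G w - (z - w)) (z - w)
      simpa using h3
    nlinarith [norm_nonneg (z - w)]
  intro x hx hxseg
  obtain ⟨u, v, hu, hv, huv, hGx⟩ := hxseg
  have hc : (u : ℂ) + (v : ℂ) = 1 := by exact_mod_cast huv
  set y : ℂ := u • a + v • b with hydef
  have hymem : y ∈ segment ℝ a b := ⟨u, v, hu, hv, huv, rfl⟩
  have hy : y ∈ U := hseg hymem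
  have hay : a - y = v • (a - b) := by
    rw [hydef]
    simp only [Complex.real_smul, smul_eq_mul]
    push_cast
    linear_combination (-a) * hc
  have hby : b - y = u • (b - a) := by
    rw [hydef]
    simp only [Complex.real_smul, smul_eq_mul]
    push_cast
    linear_combination (-b) * hc
  -- |G x - G y| ≤ δ L
  have hGxy : ‖G x - G y‖ ≤ δ * L := by
    have hrepr : G x - G y = u • (G a - G y - (a - y)) + v • (G b - G y - (b - y)) := by
      rw [← hGx]
      simp only [hay, hby, Complex.real_smul]
      linear_combination (G y) * hc
    have e1 := key a ha y hy
    have e2 := key b hb y hy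
    have hAay : ‖a - y‖ = v * L := by
      rw [hay, hL]
      rw [Complex.real_smul, norm_mul, Complex.norm_real, Real.norm_eq_abs, abs_of_nonneg hv, norm_sub_rev]
    have hAby : ‖b - y‖ = u * L := by
      rw [hby, hL]
      rw [Complex.real_smul, norm_mul, Complex.norm_real, Real.norm_eq_abs, abs_of_nonneg hu]
    calc ‖G x - G y‖
        ≤ ‖u • (G a - G y - (a - y))‖ + ‖v • (G b - G y - (b - y))‖ := by
          rw [hrepr]; exact norm_add_le _ _
      _ = u * ‖G a - G y - (a - y)‖ + v * ‖G b - G y - (b - y)‖ := by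
          simp only [Complex.real_smul, norm_mul, Complex.norm_real, Real.norm_eq_abs,
            abs_of_nonneg hu, abs_of_nonneg hv]
      _ ≤ u * (δ * (v * L)) + v * (δ * (u * L)) := by
          rw [← hAay, ← hAby]
          exact add_le_add (mul_le_mul_of_nonneg_left e1 hu) (mul_le_mul_of_nonneg_left e2 hv)
      _ ≤ δ * L := by
          have h4 : u * v ≤ 1 / 4 := by nlinarith [sq_nonneg (u - v)]
          nlinarith [mul_le_mul_of_nonneg_right h4 (mul_pos hδ0 hL0).le,
            (mul_pos hδ0 hL0).le]
  -- d is a lower bound for distances from the segment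
  have hdy : d ≤ Metric.infDist y Uᶜ := by
    rw [hd]
    exact ciInf_le ⟨0, by rintro _ ⟨p, rfl⟩; exact Metric.infDist_nonneg⟩
      (⟨y, hymem⟩ : segment ℝ a b)
  set e : ℝ := ‖x - y‖ with hedef
  have he0 : 0 ≤ e := norm_nonneg _
  have he : (1 - δ) * e ≤ δ * L := le_trans (hlow x hx y hy) hGxy
  set r0 : ℝ := Metric.infDist x Uᶜ with hr0def
  have hr0nn : 0 ≤ r0 := Metric.infDist_nonneg
  have hr : d ≤ r0 + e := by
    have h1 : Metric.infDist y Uᶜ ≤ r0 + dist y x := Metric.infDist_le_infDist_add_dist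
    have h2 : dist y x = e := by rw [Complex.dist_eq, hedef, norm_sub_rev]
    linarith [hdy, h1.trans_eq (by rw [h2])]
  have part1 : r0 > d / 4 := by nlinarith [mul_nonneg hδ0.le he0]
  refine ⟨part1, ?_⟩
  -- choose radius ε
  have hρ : d / (4 * (1 - δ)) < r0 := by
    rw [div_lt_iff₀ (by positivity)]
    nlinarith [mul_nonneg hδ0.le he0, mul_le_mul_of_nonneg_left hr h1δ.le]
  obtain ⟨ε, hε1, hε2⟩ := exists_between hρ
  have hεpos : 0 ≤ ε := le_of_lt (lt_of_le_of_lt (by positivity) hε1)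
  have hball : Metric.closedBall x ε ⊆ U := by
    intro z hz
    by_contra hzU
    have h1 : Metric.infDist x Uᶜ ≤ dist x z :=
      Metric.infDist_le_dist_of_mem (Set.mem_compl hzU)
    rw [Metric.mem_closedBall] at hz
    rw [dist_comm] at h1
    exact absurd (h1.trans hz) (not_le.mpr hε2)
  -- approximates linear on
  have happrox : ApproximatesLinearOn G (ContinuousLinearMap.id ℂ ℂ) U δ.toNNReal := by
    intro p hp q hq
    have h := key p hp q hq
    simpa [Real.coe_toNNReal _ hδ0.le] using h
  let rinv : (ContinuousLinearMap.id ℂ ℂ).NonlinearRightInverse :=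
    { toFun := id
      nnnorm := 1
      bound' := fun y => by simp
      right_inv' := fun y => by simp }
  have hsurj := happrox.surjOn_closedBall_of_nonlinearRightInverse rinv hεpos hball
  have hrad : ((rinv.nnnorm : ℝ)⁻¹ - (δ.toNNReal : ℝ)) = 1 - δ := by
    simp [rinv, Real.coe_toNNReal _ hδ0.le]
  rw [hrad] at hsurj
  -- the complement of G '' U is nonempty
  have hGUc : ((G '' U)ᶜ).Nonempty := by
    by_contra hemp
    rw [Set.not_nonempty_iff_eq_empty, Set.compl_empty_iff] at hemp
    have hclosed : IsClosed U := by
      rw [← isSeqClosed_iff_isClosed]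
      intro w z hw hz
      have hcu : CauchySeq w := hz.cauchySeq
      have hcGw : CauchySeq (fun n => G (w n)) := by
        rw [Metric.cauchySeq_iff] at hcu ⊢
        intro η hη
        obtain ⟨N, hN⟩ := hcu (η / 2) (by positivity)
        refine ⟨N, fun m hm n hn => ?_⟩
        have h1 := hup (w m) (hw m) (w n) (hw n)
        have h2 := hN m hm n hn
        rw [Complex.dist_eq] at h2 ⊢
        nlinarith [norm_nonneg (w m - w n)]
      obtain ⟨q, hq⟩ := cauchySeq_tendsto_of_complete hcGw
      have hqmem : q ∈ G '' U := hemp ▸ Set.mem_univ q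
      obtain ⟨p, hpU, hpq⟩ := hqmem
      have hwp : Filter.Tendsto w Filter.atTop (nhds p) := by
        rw [tendsto_iff_dist_tendsto_zero]
        have hbound : ∀ n, dist (w n) p ≤ (1 - δ)⁻¹ * dist (G (w n)) q := by
          intro n
          have h1 := hlow (w n) (hw n) p hpU
          rw [Complex.dist_eq, Complex.dist_eq, ← hpq]
          rw [le_inv_mul_iff₀ h1δ]
          exact h1
        have htend : Filter.Tendsto (fun n => (1 - δ)⁻¹ * dist (G (w n)) q)
            Filter.atTop (nhds 0) := by
          have := (tendsto_iff_dist_tendsto_zero.mp hq)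
          simpa using this.const_mul (1 - δ)⁻¹
        exact squeeze_zero (fun n => dist_nonneg) hbound htend
      have : z = p := tendsto_nhds_unique hz hwp
      exact this ▸ hpU
    have huniv : U = Set.univ := IsClopen.eq_univ ⟨hclosed, hU⟩ ⟨a, ha⟩
    obtain ⟨w0, hw0⟩ := hUc
    exact hw0 (huniv ▸ Set.mem_univ w0)
  -- conclude
  have hge : (1 - δ) * ε ≤ Metric.infDist (G x) (G '' U)ᶜ := by
    by_contra hlt
    push_neg at hlt
    obtain ⟨w, hwmem, hwd⟩ := (Metric.infDist_lt_iff hGUc).mp hlt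
    have : w ∈ Metric.closedBall (G x) ((1 - δ) * ε) := by
      rw [Metric.mem_closedBall, dist_comm]; exact hwd.le
    obtain ⟨p, hp, rfl⟩ := hsurj this
    exact hwmem (Set.mem_image_of_mem G (hball hp))
  have hfin : d / 4 < (1 - δ) * ε := by
    have h := (div_lt_iff₀ (by positivity : (0:ℝ) < 4 * (1 - δ))).mp hε1
    nlinarith
  linarith
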